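/- Let G = ([n], E) be a DAG with weights w ∈ ℝ^E and weight matrix C, and let j→i be an edge of the transitive closure G*. Then the inequality x_i − x_j ≤ c*_ij is non-redundant in the description of Q(C) — i.e., the polyhedron defined by all the inequalities x_k − x_l ≤ c*_kl for edges l→k of G* other than j→i strictly contains Q(C) — if and only if j→i ∈ G^♭_w. Equivalently, the hyperplane {x : x_i − x_j = c*_ij} supports a facet of the polyhedron Q(C) ⊆ ℝ^n/ℝ𝟙 exactly when j→i belongs to the weighted transitive reduction. -/

import Mathlib

open scoped Classical
noncomputable section

/-- The min-plus tropical semiring `T = ℝ ∪ {∞}` with `⊕ = min` and `⊙ = +`. -/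
abbrev Trop : Type := WithTop ℝ

/-- Min-plus identity matrix: `0` on the diagonal, `∞` off the diagonal. -/
def mpId {n : ℕ} : Matrix (Fin n) (Fin n) Trop := fun i j => if i = j then 0 else ⊤

/-- Min-plus matrix product. -/
def mpMul {n : ℕ} (A B : Matrix (Fin n) (Fin n) Trop) : Matrix (Fin n) (Fin n) Trop :=
  fun i j => Finset.univ.inf fun k => A i k + B k j

/-- Entrywise minimum (tropical sum) of matrices. -/
def mpAdd {n : ℕ} (A B : Matrix (Fin n) (Fin n) Trop) : Matrix (Fin n) (Fin n) Trop :=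
  fun i j => A i j ⊓ B i j

/-- Min-plus matrix power. -/
def mpPow {n : ℕ} (A : Matrix (Fin n) (Fin n) Trop) : ℕ → Matrix (Fin n) (Fin n) Trop
  | 0 => mpId
  | k + 1 => mpMul (mpPow A k) A

/-- Kleene star `A* = I ⊕ A ⊕ A^{⊙2} ⊕ ⋯ ⊕ A^{⊙(n−1)}`. -/
def kleene {n : ℕ} (A : Matrix (Fin n) (Fin n) Trop) : Matrix (Fin n) (Fin n) Trop :=
  fun i j => (Finset.range n).inf fun k => mpPow A k i j

/-- `p` is a directed path from `j` to `i` in the digraph with edge relation `E`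
(`E a b` meaning there is an edge `a → b`), recorded as its list of vertices. -/
def IsPathFrom {n : ℕ} (E : Fin n → Fin n → Prop) (j i : Fin n) (p : List (Fin n)) : Prop :=
  p.head? = some j ∧ p.getLast? = some i ∧ p.Chain' E

/-- A digraph is acyclic if the only paths from a vertex to itself are trivial. -/
def IsDAG {n : ℕ} (E : Fin n → Fin n → Prop) : Prop :=
  ∀ (j : Fin n) (p : List (Fin n)), IsPathFrom E j j p → p.length ≤ 1

/-- `C ∈ T^{n×n}` is supported on the digraph `E` : zero diagonal, and for `i ≠ j`
the entry `c_ij` is finite exactly when `j → i` is an edge. -/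
def SupportedOn {n : ℕ} (C : Matrix (Fin n) (Fin n) Trop) (E : Fin n → Fin n → Prop) : Prop :=
  (∀ i, C i i = 0) ∧ ∀ i j, i ≠ j → (C i j ≠ ⊤ ↔ E j i)

/-- The edge weight function of a weight matrix: `cw C a b = c_{ba}` is the weight of
the edge `a → b`. -/
def cw {n : ℕ} (C : Matrix (Fin n) (Fin n) Trop) : Fin n → Fin n → ℝ :=
  fun a b => WithTop.untopD 0 (C b a)

/-- Total weight of a path (sum of the weights of its consecutive edges). -/
def pathWeight {n : ℕ} (w : Fin n → Fin n → ℝ) (p : List (Fin n)) : ℝ :=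
  ((p.zip p.tail).map fun q => w q.1 q.2).sum

/-- The edge `j → i` belongs to the weighted transitive reduction `G^♭_w`:
the single edge is the unique minimum-weight directed path from `j` to `i`. -/
def InWTR {n : ℕ} (E : Fin n → Fin n → Prop) (w : Fin n → Fin n → ℝ) (j i : Fin n) : Prop :=
  E j i ∧ ∀ p : List (Fin n), IsPathFrom E j i p → p ≠ [j, i] → w j i < pathWeight w p

/-- Weighted digraph polyhedron `Q(C) = {x : x_i − x_j ≤ c_ij}` (as the saturated
subset of `ℝ^n` representing a subset of `ℝ^n/ℝ𝟙`). -/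
def wdp {n : ℕ} (C : Matrix (Fin n) (Fin n) Trop) : Set (Fin n → ℝ) :=
  {x | ∀ i j, i ≠ j → ((x i - x j : ℝ) : Trop) ≤ C i j}

/-- The tropical polyhedron generated by the columns of `V`: all min-plus linear
combinations `V ⊙ λ`, `λ ∈ ℝ^n` (as a saturated subset of `ℝ^d`). -/
def tconvM {d n : ℕ} (V : Matrix (Fin d) (Fin n) Trop) : Set (Fin d → ℝ) :=
  {x | ∃ lam : Fin n → ℝ, ∀ i, (x i : Trop) = Finset.univ.inf fun j => V i j + (lam j : Trop)}

/-- `v` is reachable from `s`. -/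
def Reaches {n : ℕ} (E : Fin n → Fin n → Prop) (s v : Fin n) : Prop :=
  ∃ p, IsPathFrom E s v p

/-- Edges of the transitive closure `G*`: `j → i` with `i ≠ j` reachable from `j`. -/
def EStar {n : ℕ} (E : Fin n → Fin n → Prop) (j i : Fin n) : Prop :=
  j ≠ i ∧ ∃ p, IsPathFrom E j i p

section Aux
variable {n : ℕ}

lemma pathWeight_singleton (w : Fin n → Fin n → ℝ) (v : Fin n) : pathWeight w [v] = 0 := by
  simp [pathWeight]

lemma pathWeight_cons (w : Fin n → Fin n → ℝ) (a b : Fin n) (l : List (Fin n)) :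
    pathWeight w (a :: b :: l) = w a b + pathWeight w (b :: l) := by
  simp [pathWeight]

lemma pathWeight_pair (w : Fin n → Fin n → ℝ) (a b : Fin n) :
    pathWeight w [a, b] = w a b := by
  simp [pathWeight]

lemma isPathFrom_singleton (E : Fin n → Fin n → Prop) (v : Fin n) : IsPathFrom E v v [v] :=
  ⟨rfl, rfl, List.isChain_singleton v⟩

lemma isPathFrom_pair {E : Fin n → Fin n → Prop} {a b : Fin n} (h : E a b) :
    IsPathFrom E a b [a, b] := ⟨rfl, rfl, List.isChain_pair.mpr h⟩

lemma IsPathFrom.ne_nil {E : Fin n → Fin n → Prop} {j i : Fin n} {p : List (Fin n)}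
    (h : IsPathFrom E j i p) : p ≠ [] := by
  rintro rfl; simp [IsPathFrom] at h

lemma IsPathFrom.length_pos {E : Fin n → Fin n → Prop} {j i : Fin n} {p : List (Fin n)}
    (h : IsPathFrom E j i p) : 0 < p.length := List.length_pos_iff.mpr h.ne_nil

lemma head?_eq_cons {α : Type*} {p : List α} {a : α} (h : p.head? = some a) :
    ∃ t, p = a :: t := by
  cases p with
  | nil => simp at h
  | cons x t => simp at h; exact ⟨t, by rw [h]⟩

lemma IsPathFrom.two_le_length {E : Fin n → Fin n → Prop} {j i : Fin n} {p : List (Fin n)}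
    (h : IsPathFrom E j i p) (hne : j ≠ i) : 2 ≤ p.length := by
  obtain ⟨t, rfl⟩ := head?_eq_cons h.1
  cases t with
  | nil => exact absurd (show j = i by simpa using h.2.1) hne
  | cons y t => simp

lemma pathWeight_append (w : Fin n → Fin n → ℝ) {b : Fin n} :
    ∀ {p q : List (Fin n)}, p.getLast? = some b → q.head? = some b →
    pathWeight w (p ++ q.tail) = pathWeight w p + pathWeight w q := by
  intro p
  induction p with
  | nil => intro q h; simp at h
  | cons x p ih =>
    intro q hlast hhead
    cases p with
    | nil =>
      simp at hlast; subst hlast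
      obtain ⟨t, rfl⟩ := head?_eq_cons hhead
      simp [pathWeight_singleton]
    | cons y p' =>
      have h' : (y :: p').getLast? = some b := by
        rw [← hlast]; symm; exact List.getLast?_cons_cons ..
      have := ih (q := q) h' hhead
      simp only [List.cons_append] at *
      rw [pathWeight_cons, pathWeight_cons, this, add_assoc]

lemma IsPathFrom.append {E : Fin n → Fin n → Prop} {a b c : Fin n} {p q : List (Fin n)}
    (hp : IsPathFrom E a b p) (hq : IsPathFrom E b c q) :
    IsPathFrom E a c (p ++ q.tail) := by
  obtain ⟨t, rfl⟩ := head?_eq_cons hq.1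
  refine ⟨?_, ?_, ?_⟩
  · cases p with
    | nil => exact absurd rfl hp.ne_nil
    | cons x l => simpa using hp.1
  · cases t with
    | nil =>
      have : b = c := by simpa using hq.2.1
      subst this; simpa using hp.2.1
    | cons y t' =>
      have h1 : (y :: t').getLast? = some c := by
        rw [← hq.2.1]; symm; exact List.getLast?_cons_cons ..
      rw [List.tail_cons, List.getLast?_append, h1]; rfl
  · apply List.IsChain.append hp.2.2 (hq.2.2.tail)
    intro x hx y hy
    cases t with
    | nil => simp at hy
    | cons z t' =>
      simp only [List.tail_cons, List.head?_cons, Option.mem_def, Option.some.injEq] at hy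
      rw [hp.2.1] at hx
      simp only [Option.mem_def, Option.some.injEq] at hx
      subst hx; subst hy
      exact (List.isChain_cons_cons.mp hq.2.2).1

lemma length_append_tail {α : Type*} (p q : List α) (hq : q ≠ []) :
    (p ++ q.tail).length + 1 = p.length + q.length := by
  simp [List.length_tail]
  cases q with
  | nil => simp at hq
  | cons x t => simp; omega

end Aux
section Aux2
variable {n : ℕ} {E : Fin n → Fin n → Prop} {C : Matrix (Fin n) (Fin n) Trop}

lemma IsDAG.no_loop (hdag : IsDAG E) (v : Fin n) : ¬ E v v := fun h => by
  have := hdag v [v, v] (isPathFrom_pair h); simp at this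

lemma IsDAG.nodup (hdag : IsDAG E) : ∀ p : List (Fin n), p.Chain' E → p.Nodup := by
  intro p
  induction p with
  | nil => simp
  | cons x t ih =>
    intro hc
    rw [List.nodup_cons]
    refine ⟨fun hx => ?_, ih hc.tail⟩
    obtain ⟨t1, t2, rfl⟩ := List.append_of_mem hx
    have hpre : (x :: (t1 ++ [x])) <+: (x :: (t1 ++ x :: t2)) := ⟨t2, by simp⟩
    have hchain := hc.prefix hpre
    have hpath : IsPathFrom E x x (x :: (t1 ++ [x])) := by
      refine ⟨rfl, ?_, hchain⟩
      show ((x :: t1) ++ [x]).getLast? = some x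
      exact List.getLast?_concat
    have := hdag x _ hpath
    simp at this

lemma IsPathFrom.length_le_n (hdag : IsDAG E) {p : List (Fin n)} {j i : Fin n}
    (h : IsPathFrom E j i p) : p.length ≤ n := by
  have := (hdag.nodup p h.2.2).length_le_card
  simpa using this

lemma edge_coe (hsupp : SupportedOn C E) (hdag : IsDAG E) {u v : Fin n} (h : E u v) :
    C v u = ((cw C u v : ℝ) : Trop) := by
  have hne : v ≠ u := fun e => hdag.no_loop v (e ▸ h)
  have hnt : C v u ≠ ⊤ := (hsupp.2 v u hne).mpr h
  obtain ⟨r, hr⟩ := WithTop.ne_top_iff_exists.mp hnt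
  rw [← hr]; simp [cw, ← hr]

lemma mpPow_succ_le (hsupp : SupportedOn C E) (k : ℕ) (a b : Fin n) :
    mpPow C (k + 1) a b ≤ mpPow C k a b := by
  calc mpPow C (k + 1) a b ≤ mpPow C k a b + C b b := Finset.inf_le (Finset.mem_univ b)
  _ = mpPow C k a b := by rw [hsupp.1 b, add_zero]

lemma mpPow_anti (hsupp : SupportedOn C E) {k l : ℕ} (hkl : k ≤ l) (a b : Fin n) :
    mpPow C l a b ≤ mpPow C k a b := by
  induction l with
  | zero => simp_all
  | succ m ih =>
    rcases Nat.lt_or_ge k (m + 1) with h | h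
    · exact le_trans (mpPow_succ_le hsupp m a b) (ih (by omega))
    · have : k = m + 1 := by omega
      subst this; exact le_rfl

lemma mpPow_le_pathWeight (hsupp : SupportedOn C E) (hdag : IsDAG E) :
    ∀ (k : ℕ) (p : List (Fin n)) (a b : Fin n), IsPathFrom E b a p → p.length ≤ k + 1 →
      mpPow C k a b ≤ ((pathWeight (cw C) p : ℝ) : Trop) := by
  intro k
  induction k with
  | zero =>
    intro p a b hp hlen
    have h1 : 0 < p.length := hp.length_pos
    obtain ⟨t, rfl⟩ := head?_eq_cons hp.1
    have : t = [] := by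
      cases t with
      | nil => rfl
      | cons y t' => simp at hlen
    subst this
    have hab : b = a := by simpa using hp.2.1
    subst hab
    simp [mpPow, mpId, pathWeight_singleton]
  | succ k ih =>
    intro p a b hp hlen
    obtain ⟨t, rfl⟩ := head?_eq_cons hp.1
    cases t with
    | nil =>
      have hab : b = a := by simpa using hp.2.1
      subst hab
      have : mpPow C (k+1) b b ≤ mpPow C 0 b b := mpPow_anti hsupp (Nat.zero_le _) b b
      simpa [mpPow, mpId, pathWeight_singleton] using this
    | cons m rest =>
      have hq : IsPathFrom E m a (m :: rest) := by
        refine ⟨rfl, ?_, hp.2.2.tail⟩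
        rw [← hp.2.1]; symm; exact List.getLast?_cons_cons ..
      have hedge : E b m := (List.isChain_cons_cons.mp hp.2.2).1
      have hih := ih (m :: rest) a m hq (by simp at hlen ⊢; omega)
      calc mpPow C (k+1) a b ≤ mpPow C k a m + C m b := Finset.inf_le (Finset.mem_univ m)
      _ ≤ ((pathWeight (cw C) (m :: rest) : ℝ) : Trop) + ((cw C b m : ℝ) : Trop) := by
          rw [edge_coe hsupp hdag hedge]; exact add_le_add_left hih _
      _ = ((pathWeight (cw C) (b :: m :: rest) : ℝ) : Trop) := by
          rw [← WithTop.coe_add, pathWeight_cons]; norm_num [add_comm]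

lemma exists_path_of_mpPow_ne_top (hsupp : SupportedOn C E) :
    ∀ (k : ℕ) (a b : Fin n), mpPow C k a b ≠ ⊤ →
    ∃ p, IsPathFrom E b a p ∧ ((pathWeight (cw C) p : ℝ) : Trop) ≤ mpPow C k a b := by
  intro k
  induction k with
  | zero =>
    intro a b h
    simp only [mpPow, mpId] at h ⊢
    by_cases hab : a = b
    · subst hab
      exact ⟨[a], isPathFrom_singleton E a, by simp [pathWeight_singleton]⟩
    · simp [hab] at h
  | succ k ih =>
    intro a b h
    have hne : (Finset.univ : Finset (Fin n)).Nonempty := ⟨b, Finset.mem_univ b⟩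
    obtain ⟨m, _, hm⟩ := Finset.exists_mem_eq_inf Finset.univ hne
      (fun m => mpPow C k a m + C m b)
    have hval : mpPow C (k+1) a b = mpPow C k a m + C m b := hm
    rw [hval] at h ⊢
    have h1 : mpPow C k a m ≠ ⊤ := fun e => h (by simp [e])
    have h2 : C m b ≠ ⊤ := fun e => h (by simp [e])
    obtain ⟨q, hq, hqw⟩ := ih a m h1
    by_cases hmb : m = b
    · subst hmb
      exact ⟨q, hq, by rw [hsupp.1 m, add_zero]; exact hqw⟩
    · have hedge : E b m := (hsupp.2 m b hmb).mp h2
      obtain ⟨q', rfl⟩ := head?_eq_cons hq.1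
      refine ⟨b :: m :: q', ⟨rfl, ?_, List.isChain_cons_cons.mpr ⟨hedge, hq.2.2⟩⟩, ?_⟩
      · rw [← hq.2.1]; exact List.getLast?_cons_cons ..
      · rw [pathWeight_cons, WithTop.coe_add]
        rw [show C m b = ((cw C b m : ℝ) : Trop) from ?_]
        · rw [add_comm (mpPow C k a m)]
          exact add_le_add_right hqw _
        · obtain ⟨r, hr⟩ := WithTop.ne_top_iff_exists.mp h2
          rw [← hr]; simp [cw, ← hr]

end Aux2
section Aux3
variable {n : ℕ} {E : Fin n → Fin n → Prop} {C : Matrix (Fin n) (Fin n) Trop}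

lemma kleene_le_pathWeight (hsupp : SupportedOn C E) (hdag : IsDAG E) {p : List (Fin n)}
    {a b : Fin n} (h : IsPathFrom E b a p) :
    kleene C a b ≤ ((pathWeight (cw C) p : ℝ) : Trop) := by
  have hlen := h.length_le_n hdag
  have h1 : 0 < p.length := h.length_pos
  have hk : p.length - 1 < n := by omega
  calc kleene C a b ≤ mpPow C (p.length - 1) a b := Finset.inf_le (Finset.mem_range.mpr hk)
  _ ≤ _ := mpPow_le_pathWeight hsupp hdag _ p a b h (by omega)

lemma exists_path_of_kleene_ne_top (hsupp : SupportedOn C E) {a b : Fin n}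
    (h : kleene C a b ≠ ⊤) :
    ∃ p, IsPathFrom E b a p ∧ ((pathWeight (cw C) p : ℝ) : Trop) ≤ kleene C a b := by
  have hn : 0 < n := a.pos
  obtain ⟨k, _, hk⟩ := Finset.exists_mem_eq_inf (Finset.range n) ⟨0, Finset.mem_range.mpr hn⟩
    (fun k => mpPow C k a b)
  rw [show kleene C a b = mpPow C k a b from hk] at h ⊢
  exact exists_path_of_mpPow_ne_top hsupp k a b h

lemma kleene_ne_top_iff (hsupp : SupportedOn C E) (hdag : IsDAG E) {a b : Fin n} :
    kleene C a b ≠ ⊤ ↔ ∃ p, IsPathFrom E b a p := by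
  constructor
  · intro h
    obtain ⟨p, hp, -⟩ := exists_path_of_kleene_ne_top hsupp h
    exact ⟨p, hp⟩
  · rintro ⟨p, hp⟩
    have := kleene_le_pathWeight hsupp hdag hp
    exact fun e => by simp [e] at this

lemma kleene_diag (hsupp : SupportedOn C E) (hdag : IsDAG E) (v : Fin n) :
    kleene C v v = 0 := by
  have hle : kleene C v v ≤ 0 := by
    calc kleene C v v ≤ mpPow C 0 v v := Finset.inf_le (Finset.mem_range.mpr v.pos)
    _ = 0 := by simp [mpPow, mpId]
  have hnt : kleene C v v ≠ ⊤ := fun e => by simp [e] at hle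
  obtain ⟨p, hp, hpw⟩ := exists_path_of_kleene_ne_top hsupp hnt
  have hlen := hdag v p hp
  obtain ⟨t, rfl⟩ := head?_eq_cons hp.1
  have : t = [] := by
    cases t with
    | nil => rfl
    | cons y t' => simp at hlen
  subst this
  rw [pathWeight_singleton] at hpw
  exact le_antisymm hle (by simpa using hpw)

lemma kleene_triangle (hsupp : SupportedOn C E) (hdag : IsDAG E) (a b s : Fin n) :
    kleene C a s ≤ C a b + kleene C b s := by
  by_cases h1 : C a b = ⊤
  · simp [h1]
  by_cases h2 : kleene C b s = ⊤
  · simp [h2]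
  by_cases hab : a = b
  · subst hab; rw [hsupp.1 a, zero_add]
  have hedge : E b a := (hsupp.2 a b hab).mp h1
  obtain ⟨p, hp, hpw⟩ := exists_path_of_kleene_ne_top hsupp h2
  have hq : IsPathFrom E s a (p ++ [b, a].tail) := hp.append (isPathFrom_pair hedge)
  have hkey := kleene_le_pathWeight hsupp hdag hq
  rw [pathWeight_append (cw C) hp.2.1 (show ([b, a] : List (Fin n)).head? = some b from rfl), pathWeight_pair] at hkey
  calc kleene C a s ≤ ((pathWeight (cw C) p + cw C b a : ℝ) : Trop) := hkey
  _ = ((cw C b a : ℝ) : Trop) + ((pathWeight (cw C) p : ℝ) : Trop) := by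
      rw [← WithTop.coe_add, add_comm]
  _ ≤ C a b + kleene C b s := by
      rw [edge_coe hsupp hdag hedge]
      exact add_le_add le_rfl hpw

end Aux3
section Aux4
variable {n : ℕ} {E : Fin n → Fin n → Prop} {C : Matrix (Fin n) (Fin n) Trop}

lemma telescope (x : Fin n → ℝ) (w : Fin n → Fin n → ℝ) :
    ∀ (p : List (Fin n)) (a b : Fin n), p.head? = some b → p.getLast? = some a →
    (∀ u v : Fin n, (u, v) ∈ p.zip p.tail → x v - x u ≤ w u v) →
    x a - x b ≤ pathWeight w p := by
  intro p
  induction p with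
  | nil => intro a b hh; simp at hh
  | cons c t ih =>
    intro a b hh hl hcons
    have hcb : c = b := by simpa using hh
    subst hcb
    cases t with
    | nil =>
      have : c = a := by simpa using hl
      subst this
      simp [pathWeight_singleton]
    | cons d t' =>
      have step : x d - x c ≤ w c d := hcons c d (by simp)
      have hl' : (d :: t').getLast? = some a := by
        rw [← hl]; symm; exact List.getLast?_cons_cons ..
      have ih' := ih a d rfl hl' (fun u v huv => hcons u v (by
        simp only [List.tail_cons, List.zip_cons_cons]
        exact List.mem_cons_of_mem _ huv))
      rw [pathWeight_cons]
      linarith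

lemma chain'_mem_zip : ∀ {p : List (Fin n)}, p.Chain' E → ∀ {u v : Fin n},
    (u, v) ∈ p.zip p.tail → E u v := by
  intro p
  induction p with
  | nil => intro _ u v h; simp at h
  | cons c t ih =>
    intro hc u v h
    cases t with
    | nil => simp at h
    | cons d t' =>
      simp only [List.tail_cons, List.zip_cons_cons, List.mem_cons] at h
      rcases h with h | h
      · rw [Prod.mk.injEq] at h
        obtain ⟨rfl, rfl⟩ := h
        exact (List.isChain_cons_cons.mp hc).1
      · exact ih hc.tail h

lemma wdp_telescope (hsupp : SupportedOn C E) (hdag : IsDAG E) {x : Fin n → ℝ}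
    (hx : x ∈ wdp C) {p : List (Fin n)} {a b : Fin n} (hp : IsPathFrom E b a p) :
    x a - x b ≤ pathWeight (cw C) p := by
  apply telescope x (cw C) p a b hp.1 hp.2.1
  intro u v huv
  have hedge : E u v := chain'_mem_zip hp.2.2 huv
  have hne : v ≠ u := fun e => (by exact absurd (e ▸ hedge) ((fun h => by
    have := hdag u [u, u] (isPathFrom_pair h); simp at this) : ¬ E u u))
  have hle := hx v u hne
  rw [edge_coe hsupp hdag hedge] at hle
  exact_mod_cast hle

lemma zip_mem_split : ∀ (p : List (Fin n)) (u v : Fin n), (u, v) ∈ p.zip p.tail →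
    ∃ s t, p = s ++ u :: v :: t := by
  intro p
  induction p with
  | nil => intro u v h; simp at h
  | cons c t ih =>
    intro u v h
    cases t with
    | nil => simp at h
    | cons d t' =>
      simp only [List.tail_cons, List.zip_cons_cons, List.mem_cons] at h
      rcases h with h | h
      · rw [Prod.mk.injEq] at h
        obtain ⟨rfl, rfl⟩ := h
        exact ⟨[], t', by simp⟩
      · obtain ⟨s, t2, hst⟩ := ih u v h
        exact ⟨c :: s, t2, by simp [hst]⟩

lemma path_no_ji (hdag : IsDAG E) {p : List (Fin n)} {j i : Fin n}
    (hp : IsPathFrom E j i p) (hne : p ≠ [j, i]) :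
    ∀ u v : Fin n, (u, v) ∈ p.zip p.tail → ¬(u = j ∧ v = i) := by
  rintro u v huv ⟨rfl, rfl⟩
  obtain ⟨s, t, rfl⟩ := zip_mem_split p u v huv
  have hnd : (s ++ u :: v :: t).Nodup := hdag.nodup _ hp.2.2
  have hs : s = [] := by
    cases s with
    | nil => rfl
    | cons c s' =>
      have hc : c = u := by simpa using hp.1
      subst hc
      rw [List.nodup_append] at hnd
      exact ((hnd.2.2 _ List.mem_cons_self _ List.mem_cons_self rfl)).elim
  subst hs
  have ht : t = [] := by
    cases t with
    | nil => rfl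
    | cons c t' =>
      have hlast : (c :: t').getLast? = some v := by
        have h1 : (u :: v :: c :: t').getLast? = some v := by simpa using hp.2.1
        rw [List.getLast?_cons_cons, List.getLast?_cons_cons] at h1
        exact h1
      have hvmem : v ∈ c :: t' := by
        obtain ⟨h, hv⟩ := List.mem_getLast?_eq_getLast (l := c :: t') (x := v) hlast
        rw [hv]; exact List.getLast_mem h
      simp only [List.nil_append, List.nodup_cons] at hnd
      exact (hnd.2.1 hvmem).elim
  subst ht
  exact hne rfl

lemma wdp_subset_relaxed (hsupp : SupportedOn C E) (hdag : IsDAG E) (i j : Fin n) :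
    wdp C ⊆ {x : Fin n → ℝ | ∀ a b : Fin n, EStar E b a → ¬(a = i ∧ b = j) →
        ((x a - x b : ℝ) : Trop) ≤ kleene C a b} := by
  intro x hx a b hab _
  obtain ⟨-, p, hp⟩ := hab
  have hnt : kleene C a b ≠ ⊤ := (kleene_ne_top_iff hsupp hdag).mpr ⟨p, hp⟩
  obtain ⟨q, hq, hqw⟩ := exists_path_of_kleene_ne_top hsupp hnt
  have htel := wdp_telescope hsupp hdag hx hq
  exact le_trans (WithTop.coe_le_coe.mpr htel) hqw

lemma relaxed_subset_wdp (hsupp : SupportedOn C E) (hdag : IsDAG E) {i j : Fin n}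
    (hn : ¬ InWTR E (cw C) j i) :
    {x : Fin n → ℝ | ∀ a b : Fin n, EStar E b a → ¬(a = i ∧ b = j) →
        ((x a - x b : ℝ) : Trop) ≤ kleene C a b} ⊆ wdp C := by
  intro x hx a b hab
  by_cases htop : C a b = ⊤
  · simp [htop]
  have hedge : E b a := (hsupp.2 a b hab).mp htop
  rw [edge_coe hsupp hdag hedge]
  by_cases hij : a = i ∧ b = j
  · obtain ⟨rfl, rfl⟩ := hij
    rw [InWTR] at hn
    push_neg at hn
    obtain ⟨p, hp, hpne, hple⟩ := hn hedge
    have hnoji := path_no_ji hdag hp hpne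
    have htel : x a - x b ≤ pathWeight (cw C) p := by
      apply telescope x (cw C) p a b hp.1 hp.2.1
      intro u v huv
      have hedge2 : E u v := chain'_mem_zip hp.2.2 huv
      have hne2 : u ≠ v := fun e => hdag.no_loop u (by rw [e] at hedge2 ⊢; exact hedge2)
      have hcon := hx v u ⟨hne2, [u, v], isPathFrom_pair hedge2⟩
        (fun hc => hnoji u v huv ⟨hc.2, hc.1⟩)
      have hkle := kleene_le_pathWeight hsupp hdag (isPathFrom_pair hedge2)
      rw [pathWeight_pair] at hkle
      exact_mod_cast le_trans hcon hkle
    exact WithTop.coe_le_coe.mpr (le_trans htel hple)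
  · have hcon := hx a b ⟨Ne.symm hab, [b, a], isPathFrom_pair hedge⟩ hij
    have hkle := kleene_le_pathWeight hsupp hdag (isPathFrom_pair hedge)
    rw [pathWeight_pair] at hkle
    exact le_trans hcon hkle

end Aux4
section Aux5
variable {n : ℕ}

lemma eq_pair_of_length_two {α : Type*} {p : List α} {u v : α} (hlen : p.length = 2)
    (hh : p.head? = some u) (hl : p.getLast? = some v) : p = [u, v] := by
  cases p with
  | nil => simp at hlen
  | cons a t =>
    cases t with
    | nil => simp at hlen
    | cons b t' =>
      cases t' with
      | nil =>
        have h1 : a = u := by simpa using hh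
        have h2 : b = v := by simpa using hl
        rw [h1, h2]
      | cons c t'' => simp at hlen

lemma comp_path {E F' : Fin n → Fin n → Prop} {wC wB : Fin n → Fin n → ℝ}
    (hF : ∀ u v, F' u v → ∃ p, IsPathFrom E u v p ∧ pathWeight wC p ≤ wB u v ∧ 2 ≤ p.length) :
    ∀ (q : List (Fin n)) (u v : Fin n), q.Chain' F' → q.head? = some u → q.getLast? = some v →
    ∃ P, IsPathFrom E u v P ∧ pathWeight wC P ≤ pathWeight wB q ∧ q.length ≤ P.length := by
  intro q
  induction q with
  | nil => intro u v _ h; simp at h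
  | cons c t ih =>
    intro u v hc hh hl
    have hcu : c = u := by simpa using hh
    subst hcu
    cases t with
    | nil =>
      have huv : c = v := by simpa using hl
      subst huv
      exact ⟨[c], isPathFrom_singleton E c, by simp [pathWeight_singleton], by simp⟩
    | cons d t' =>
      have hF' : F' c d := (List.isChain_cons_cons.mp hc).1
      obtain ⟨p1, hp1, hw1, hl1⟩ := hF c d hF'
      have hl'' : (d :: t').getLast? = some v := by
        rw [← hl]; symm; exact List.getLast?_cons_cons ..
      obtain ⟨P', hP', hw', hl'⟩ := ih d v hc.tail rfl hl''
      refine ⟨p1 ++ P'.tail, hp1.append hP', ?_, ?_⟩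
      · rw [pathWeight_append wC hp1.2.1 hP'.1, pathWeight_cons]
        linarith
      · have hlen := length_append_tail p1 P' hP'.ne_nil
        simp only [List.length_cons] at *
        omega

lemma reaches_step {F : Fin n → Fin n → Prop} {u b a : Fin n} (h : Reaches F u b)
    (hba : F b a) : Reaches F u a := by
  obtain ⟨p, hp⟩ := h
  exact ⟨p ++ [b, a].tail, hp.append (isPathFrom_pair hba)⟩

lemma not_reaches_back {F : Fin n → Fin n → Prop} (hdagF : IsDAG F) {a b : Fin n}
    (hba : F b a) (hne : a ≠ b) : ¬ Reaches F a b := by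
  rintro ⟨p, hp⟩
  have hp2 := hp.append (isPathFrom_pair hba)
  have hup := hdagF a _ hp2
  have h1 := length_append_tail p [b, a] (by simp)
  have h2 := hp.two_le_length hne
  simp only [List.length_cons, List.length_nil] at h1
  omega

lemma rank_lt {F : Fin n → Fin n → Prop} (hdagF : IsDAG F) {a b : Fin n} (hba : F b a)
    (hne : a ≠ b) :
    (Finset.univ.filter fun u => Reaches F u b).card
      < (Finset.univ.filter fun u => Reaches F u a).card := by
  apply Finset.card_lt_card
  have hsub : (Finset.univ.filter fun u => Reaches F u b)
      ⊆ (Finset.univ.filter fun u => Reaches F u a) := by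
    intro u hu
    rw [Finset.mem_filter] at hu ⊢
    exact ⟨hu.1, reaches_step hu.2 hba⟩
  refine (Finset.ssubset_iff_of_subset hsub).mpr
    ⟨a, Finset.mem_filter.mpr ⟨Finset.mem_univ a, ⟨[a], isPathFrom_singleton F a⟩⟩,
      fun hmem => not_reaches_back hdagF hba hne (Finset.mem_filter.mp hmem).2⟩

end Aux5
/-- The auxiliary weight matrix for the non-redundancy argument: kleene star entries,
with the entry `(i,j)` removed. -/
def redB {n : ℕ} (C : Matrix (Fin n) (Fin n) Trop) (i j : Fin n) :
    Matrix (Fin n) (Fin n) Trop :=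
  fun a b => if a = b then 0 else if a = i ∧ b = j then ⊤ else kleene C a b

/-- The auxiliary edge relation: transitive closure minus the edge `j → i`. -/
def redF {n : ℕ} (E : Fin n → Fin n → Prop) (i j : Fin n) : Fin n → Fin n → Prop :=
  fun b a => EStar E b a ∧ ¬(a = i ∧ b = j)

section Aux6
variable {n : ℕ} {E : Fin n → Fin n → Prop} {C : Matrix (Fin n) (Fin n) Trop} {i j : Fin n}

lemma redB_supported (hsupp : SupportedOn C E) (hdag : IsDAG E) :
    SupportedOn (redB C i j) (redF E i j) := by
  constructor
  · intro a; simp [redB]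
  · intro a b hab
    simp only [redB, if_neg hab]
    by_cases hij : a = i ∧ b = j
    · simp [hij, redF]
    · rw [if_neg hij]
      constructor
      · intro h
        obtain ⟨p, hp, -⟩ := exists_path_of_kleene_ne_top hsupp h
        exact ⟨⟨Ne.symm hab, p, hp⟩, hij⟩
      · rintro ⟨⟨-, p, hp⟩, -⟩
        exact (kleene_ne_top_iff hsupp hdag).mpr ⟨p, hp⟩

lemma redF_path (hsupp : SupportedOn C E) (hdag : IsDAG E) :
    ∀ u v, redF E i j u v → ∃ p, IsPathFrom E u v p ∧
      pathWeight (cw C) p ≤ cw (redB C i j) u v ∧ 2 ≤ p.length := by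
  rintro u v ⟨⟨hne, q, hq⟩, hnij⟩
  have hB : redB C i j v u = kleene C v u := by
    simp only [redB, if_neg (Ne.symm hne), if_neg hnij]
  have hnt : kleene C v u ≠ ⊤ := (kleene_ne_top_iff hsupp hdag).mpr ⟨q, hq⟩
  obtain ⟨p, hp, hpw⟩ := exists_path_of_kleene_ne_top hsupp hnt
  obtain ⟨r, hr⟩ := WithTop.ne_top_iff_exists.mp hnt
  refine ⟨p, hp, ?_, hp.two_le_length hne⟩
  have : cw (redB C i j) u v = r := by simp [cw, hB, ← hr]
  rw [this]
  rw [← hr] at hpw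
  exact_mod_cast hpw

lemma redF_dag (hsupp : SupportedOn C E) (hdag : IsDAG E) : IsDAG (redF E i j) := by
  intro v q hq
  by_contra hlen
  push_neg at hlen
  obtain ⟨P, hP, -, hlP⟩ := comp_path (redF_path hsupp hdag) q v v hq.2.2 hq.1 hq.2.1
  have := hdag v P hP
  omega

lemma redF_lower (hsupp : SupportedOn C E) (hdag : IsDAG E) (hw : InWTR E (cw C) j i)
    (hne : j ≠ i) {q : List (Fin n)} (hq : IsPathFrom (redF E i j) j i q) :
    cw C j i < pathWeight (cw (redB C i j)) q := by
  have h2 : 2 ≤ q.length := hq.two_le_length hne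
  have h3 : 3 ≤ q.length := by
    rcases Nat.lt_or_ge q.length 3 with h | h
    · have hq2 : q.length = 2 := by omega
      have := eq_pair_of_length_two hq2 hq.1 hq.2.1
      subst this
      have := List.isChain_pair.mp hq.2.2
      exact absurd (by simp : (i = i ∧ j = j)) this.2
    · exact h
  obtain ⟨P, hP, hPw, hlP⟩ := comp_path (redF_path hsupp hdag) q j i hq.2.2 hq.1 hq.2.1
  have hPne : P ≠ [j, i] := by
    intro e
    rw [e] at hlP
    simp at hlP
    omega
  exact lt_of_lt_of_le (hw.2 P hP hPne) hPw

end Aux6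
section Aux7
variable {n : ℕ} {E : Fin n → Fin n → Prop} {C : Matrix (Fin n) (Fin n) Trop} {i j : Fin n}

lemma exists_violating (hsupp : SupportedOn C E) (hdag : IsDAG E) (he : EStar E j i)
    (hw : InWTR E (cw C) j i) :
    ∃ x : Fin n → ℝ, (∀ a b : Fin n, EStar E b a → ¬(a = i ∧ b = j) →
        ((x a - x b : ℝ) : Trop) ≤ kleene C a b) ∧ x ∉ wdp C := by
  have hne : j ≠ i := he.1
  set B := redB C i j with hBdef
  set F := redF E i j with hFdef
  have suppB : SupportedOn B F := redB_supported hsupp hdag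
  have dagF : IsDAG F := redF_dag hsupp hdag
  set dval : Fin n → ℝ := fun v => WithTop.untopD 0 (kleene B v j) with hdval
  set rk : Fin n → ℕ := fun v => (Finset.univ.filter fun u => Reaches F u v).card with hrk
  set K0 : ℝ := 1 + ∑ a : Fin n, ∑ b : Fin n, |WithTop.untopD 0 (B a b)| with hK0
  set Y : ℝ := K0 * n with hY
  set M : ℝ := 1 + (∑ v : Fin n, |dval v|) + Y + Y + K0 + |cw C j i| with hM
  set y : Fin n → ℝ := fun v => -(K0 * (rk v : ℝ)) with hy
  set x : Fin n → ℝ := fun v => if kleene B v j = ⊤ then M + y v else dval v with hx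
  have hsumabs : (0:ℝ) ≤ ∑ a : Fin n, ∑ b : Fin n, |WithTop.untopD 0 (B a b)| :=
    Finset.sum_nonneg fun a _ => Finset.sum_nonneg fun b _ => abs_nonneg _
  have hK0one : (1:ℝ) ≤ K0 := by rw [hK0]; linarith
  have habsB : ∀ a b : Fin n, |WithTop.untopD 0 (B a b)| ≤ K0 := by
    intro a b
    have h1 : |WithTop.untopD 0 (B a b)| ≤ ∑ b' : Fin n, |WithTop.untopD 0 (B a b')| :=
      Finset.single_le_sum (f := fun b' => |WithTop.untopD 0 (B a b')|)
        (fun c _ => abs_nonneg _) (Finset.mem_univ b)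
    have h2 : (∑ b' : Fin n, |WithTop.untopD 0 (B a b')|)
        ≤ ∑ a' : Fin n, ∑ b' : Fin n, |WithTop.untopD 0 (B a' b')| :=
      Finset.single_le_sum (f := fun a' => ∑ b' : Fin n, |WithTop.untopD 0 (B a' b')|)
        (fun c _ => Finset.sum_nonneg fun d _ => abs_nonneg _) (Finset.mem_univ a)
    rw [hK0]; linarith
  have hdsum : (0:ℝ) ≤ ∑ v : Fin n, |dval v| := Finset.sum_nonneg fun v _ => abs_nonneg _
  have hdle : ∀ v, dval v ≤ ∑ v' : Fin n, |dval v'| := fun v =>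
    le_trans (le_abs_self _) (Finset.single_le_sum (f := fun v' => |dval v'|)
      (fun c _ => abs_nonneg _) (Finset.mem_univ v))
  have hyb : ∀ v, |y v| ≤ Y := by
    intro v
    rw [hy, hY]
    simp only [abs_neg]
    rw [abs_of_nonneg (mul_nonneg (by linarith) (Nat.cast_nonneg _))]
    apply mul_le_mul_of_nonneg_left _ (by linarith : (0:ℝ) ≤ K0)
    have hrn : rk v ≤ n := by
      rw [hrk]
      exact le_trans (Finset.card_filter_le _ _) (by simp)
    exact_mod_cast hrn
  have hY0 : (0:ℝ) ≤ Y := le_trans (abs_nonneg (y j)) (hyb j)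
  have feas : ∀ a b : Fin n, a ≠ b → ((x a - x b : ℝ) : Trop) ≤ B a b := by
    intro a b hab
    by_cases hB : B a b = ⊤
    · simp [hB]
    obtain ⟨wab, hwab⟩ := WithTop.ne_top_iff_exists.mp hB
    have hFba : F b a := (suppB.2 a b hab).mp hB
    have hwabs : |wab| ≤ K0 := by
      have h := habsB a b
      rw [← hwab] at h; simpa using h
    by_cases hRb : kleene B b j = ⊤
    · by_cases hRa : kleene B a j = ⊤
      · have hrlt : rk b < rk a := rank_lt dagF hFba hab
        have hx_a : x a = M + y a := by simp [hx, hRa]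
        have hx_b : x b = M + y b := by simp [hx, hRb]
        rw [hx_a, hx_b, ← hwab, WithTop.coe_le_coe, hy]
        have h1 : (rk b : ℝ) + 1 ≤ (rk a : ℝ) := by exact_mod_cast hrlt
        have h2 : -(K0 * (rk a : ℝ)) + K0 * (rk b : ℝ) ≤ -K0 := by nlinarith
        have h3 : -K0 ≤ wab := by have := neg_abs_le wab; linarith
        simp only
        linarith
      · have hx_a : x a = dval a := by simp [hx, hRa]
        have hx_b : x b = M + y b := by simp [hx, hRb]
        rw [hx_a, hx_b, ← hwab, WithTop.coe_le_coe]
        have h1 := hdle a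
        have h2 := hyb b
        have h3 := neg_abs_le (y b)
        have h4 := neg_abs_le wab
        have h5 := abs_nonneg (cw C j i)
        rw [hM]
        linarith
    · obtain ⟨rb, hrb⟩ := WithTop.ne_top_iff_exists.mp hRb
      have htri := kleene_triangle suppB dagF a b j
      rw [← hwab, ← hrb, ← WithTop.coe_add] at htri
      have hRa : kleene B a j ≠ ⊤ := fun e => by simp [e] at htri
      obtain ⟨ra, hra⟩ := WithTop.ne_top_iff_exists.mp hRa
      rw [← hra, WithTop.coe_le_coe] at htri
      have hx_a : x a = dval a := by simp [hx, hRa]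
      have hx_b : x b = dval b := by simp [hx, hRb]
      have hda : dval a = ra := by simp [hdval, ← hra]
      have hdb : dval b = rb := by simp [hdval, ← hrb]
      rw [hx_a, hx_b, hda, hdb, ← hwab, WithTop.coe_le_coe]
      linarith
  refine ⟨x, ?_, ?_⟩
  · intro a b hEs hnij
    have hab : a ≠ b := Ne.symm hEs.1
    have hBab : B a b = kleene C a b := by
      rw [hBdef]; simp only [redB]; rw [if_neg hab, if_neg hnij]
    rw [← hBab]
    exact feas a b hab
  · intro hmem
    have hEji : E j i := hw.1
    have h0 : kleene B j j = 0 := kleene_diag suppB dagF j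
    have h0' : kleene B j j ≠ ⊤ := by rw [h0]; exact (by simp : (0:Trop) ≠ ⊤)
    have hxj : x j = 0 := by
      simp only [hx, if_neg h0', hdval, h0]
      rfl
    have hkey : cw C j i < x i := by
      by_cases hRi : kleene B i j = ⊤
      · have hx_i : x i = M + y i := by simp [hx, hRi]
        have h2 := hyb i
        have h3 := neg_abs_le (y i)
        have h4 := le_abs_self (cw C j i)
        rw [hx_i, hM]
        linarith [hdsum, hK0one]
      · obtain ⟨q, hq, hqw⟩ := exists_path_of_kleene_ne_top suppB hRi
        have hlow := redF_lower hsupp hdag hw hne hq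
        obtain ⟨ri, hri⟩ := WithTop.ne_top_iff_exists.mp hRi
        rw [← hri, WithTop.coe_le_coe] at hqw
        have hx_i : x i = ri := by simp [hx, hRi, hdval, ← hri]
        rw [hx_i]
        linarith
    have hcon := hmem i j (Ne.symm hne)
    rw [edge_coe hsupp hdag hEji, WithTop.coe_le_coe] at hcon
    rw [hxj] at hcon
    linarith

end Aux7
/-- For a weighted DAG `(G, w)` with weight matrix `C` and an edge
`j → i` of the transitive closure `G*`, the inequality `x_i − x_j ≤ c*_ij` is
non-redundant — the polyhedron cut out by all the other inequalities `x_k − x_l ≤ c*_kl`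
(for edges `l → k` of `G*`) strictly contains `Q(C)` — iff `j → i ∈ G^♭_w`. -/
theorem stmt19 {n : ℕ} (E : Fin n → Fin n → Prop) (C : Matrix (Fin n) (Fin n) Trop)
    (hdag : IsDAG E) (hsupp : SupportedOn C E) (i j : Fin n) (he : EStar E j i) :
    wdp C ⊂ {x : Fin n → ℝ | ∀ a b : Fin n, EStar E b a → ¬(a = i ∧ b = j) →
        ((x a - x b : ℝ) : Trop) ≤ kleene C a b}
      ↔ InWTR E (cw C) j i := by
  constructor
  · intro hss
    by_contra hn
    exact absurd (Set.Subset.antisymm hss.subset (relaxed_subset_wdp hsupp hdag hn)) hss.ne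
  · intro hw
    rw [Set.ssubset_iff_of_subset (wdp_subset_relaxed hsupp hdag i j)]
    obtain ⟨x, hx1, hx2⟩ := exists_violating hsupp hdag he hw
    exact ⟨x, hx1, hx2⟩
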